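/- Let C = {C_1,...,C_l} be a chain family and A = {A_1,...,A_k} an antichain family in a finite poset P. Then C and A are orthogonal if and only if: (1) C covers c_l(P) elements, (2) A covers a_k(P) elements, and (3) c_l(P) + a_k(P) = n + kl, where n = |P|. -/
import Mathlib


open Finset

/-- `cMax α k` is the maximal cardinality of a union of `k` pairwise disjoint chains
in the finite poset `α`. -/
noncomputable def cMax (α : Type*) [PartialOrder α] [Fintype α] [DecidableEq α] (k : ℕ) : ℕ :=
  sSup {n : ℕ | ∃ f : Fin k → Finset α,
    (∀ i, IsChain (· ≤ ·) (↑(f i) : Set α)) ∧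
    Pairwise (Function.onFun Disjoint f) ∧
    n = (Finset.univ.biUnion f).card}

/-- `aMax α k` is the maximal cardinality of a union of `k` pairwise disjoint antichains
in the finite poset `α`. -/
noncomputable def aMax (α : Type*) [PartialOrder α] [Fintype α] [DecidableEq α] (k : ℕ) : ℕ :=
  sSup {n : ℕ | ∃ f : Fin k → Finset α,
    (∀ i, IsAntichain (· ≤ ·) (↑(f i) : Set α)) ∧
    Pairwise (Function.onFun Disjoint f) ∧
    n = (Finset.univ.biUnion f).card}

/-- The `k`-th row length of the Greene shape `λ(α)`. -/
noncomputable def lam (α : Type*) [PartialOrder α] [Fintype α] [DecidableEq α] (k : ℕ) : ℕ :=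
  cMax α k - cMax α (k - 1)

/-- The `k`-th column length of the Greene shape, `μ_k = a_k - a_{k-1}`. -/
noncomputable def mu (α : Type*) [PartialOrder α] [Fintype α] [DecidableEq α] (k : ℕ) : ℕ :=
  aMax α k - aMax α (k - 1)

section Aux

set_option linter.unusedSectionVars false

variable {α : Type*} [PartialOrder α] [Fintype α] [DecidableEq α]

/-- A chain meets an antichain in at most one element. -/
lemma chainAntichainCardLe (s t : Finset α)
    (hs : IsChain (· ≤ ·) (↑s : Set α)) (ht : IsAntichain (· ≤ ·) (↑t : Set α)) :
    (s ∩ t).card ≤ 1 := by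
  apply Finset.card_le_one.2
  intro a ha b hb
  simp only [Finset.mem_inter] at ha hb
  by_contra hne
  rcases hs (Finset.mem_coe.2 ha.1) (Finset.mem_coe.2 hb.1) hne with h | h
  · exact ht (Finset.mem_coe.2 ha.2) (Finset.mem_coe.2 hb.2) hne h
  · exact ht (Finset.mem_coe.2 hb.2) (Finset.mem_coe.2 ha.2) (Ne.symm hne) h

/-- The cardinality of the intersection of the two unions is the sum of the
cardinalities of pairwise intersections. -/
lemma interCardSum {l k : ℕ} (C : Fin l → Finset α) (A : Fin k → Finset α)
    (hCd : Pairwise (Function.onFun Disjoint C))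
    (hAd : Pairwise (Function.onFun Disjoint A)) :
    (Finset.univ.biUnion C ∩ Finset.univ.biUnion A).card
      = ∑ i, ∑ j, (C i ∩ A j).card := by
  have h1 : Finset.univ.biUnion C ∩ Finset.univ.biUnion A
      = Finset.univ.biUnion (fun i => Finset.univ.biUnion (fun j => C i ∩ A j)) := by
    ext a
    simp only [Finset.mem_inter, Finset.mem_biUnion, Finset.mem_univ, true_and]
    tauto
  rw [h1, Finset.card_biUnion]
  · refine Finset.sum_congr rfl fun i _ => ?_
    rw [Finset.card_biUnion]
    intro j _ j' _ hjj'
    exact ((hAd hjj').mono_left Finset.inter_subset_right).mono_right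
      Finset.inter_subset_right
  · intro i _ i' _ hii'
    refine Finset.disjoint_left.2 fun a ha ha' => ?_
    simp only [Finset.mem_biUnion, Finset.mem_univ, true_and, Finset.mem_inter] at ha ha'
    obtain ⟨j, hj, _⟩ := ha
    obtain ⟨j', hj', _⟩ := ha'
    exact Finset.disjoint_left.1 (hCd hii') hj hj'

lemma cSetBdd (k : ℕ) : BddAbove {n : ℕ | ∃ f : Fin k → Finset α,
    (∀ i, IsChain (· ≤ ·) (↑(f i) : Set α)) ∧
    Pairwise (Function.onFun Disjoint f) ∧
    n = (Finset.univ.biUnion f).card} :=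
  ⟨Fintype.card α, fun _ ⟨_, _, _, hn⟩ => hn ▸ Finset.card_le_univ _⟩

lemma aSetBdd (k : ℕ) : BddAbove {n : ℕ | ∃ f : Fin k → Finset α,
    (∀ i, IsAntichain (· ≤ ·) (↑(f i) : Set α)) ∧
    Pairwise (Function.onFun Disjoint f) ∧
    n = (Finset.univ.biUnion f).card} :=
  ⟨Fintype.card α, fun _ ⟨_, _, _, hn⟩ => hn ▸ Finset.card_le_univ _⟩

lemma le_cMax {l : ℕ} (C : Fin l → Finset α)
    (hC : ∀ i, IsChain (· ≤ ·) (↑(C i) : Set α))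
    (hCd : Pairwise (Function.onFun Disjoint C)) :
    (Finset.univ.biUnion C).card ≤ cMax α l :=
  le_csSup (cSetBdd l) ⟨C, hC, hCd, rfl⟩

lemma le_aMax {k : ℕ} (A : Fin k → Finset α)
    (hA : ∀ i, IsAntichain (· ≤ ·) (↑(A i) : Set α))
    (hAd : Pairwise (Function.onFun Disjoint A)) :
    (Finset.univ.biUnion A).card ≤ aMax α k :=
  le_csSup (aSetBdd k) ⟨A, hA, hAd, rfl⟩

lemma cMax_mem (l : ℕ) : ∃ f : Fin l → Finset α,
    (∀ i, IsChain (· ≤ ·) (↑(f i) : Set α)) ∧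
    Pairwise (Function.onFun Disjoint f) ∧
    cMax α l = (Finset.univ.biUnion f).card := by
  have hne : {n : ℕ | ∃ f : Fin l → Finset α,
      (∀ i, IsChain (· ≤ ·) (↑(f i) : Set α)) ∧
      Pairwise (Function.onFun Disjoint f) ∧
      n = (Finset.univ.biUnion f).card}.Nonempty :=
    ⟨_, fun _ => (∅ : Finset α), fun i => by simp, fun i j _ => by
      simp [Function.onFun], rfl⟩
  exact Nat.sSup_mem hne (cSetBdd l)

lemma aMax_mem (k : ℕ) : ∃ f : Fin k → Finset α,
    (∀ i, IsAntichain (· ≤ ·) (↑(f i) : Set α)) ∧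
    Pairwise (Function.onFun Disjoint f) ∧
    aMax α k = (Finset.univ.biUnion f).card := by
  have hne : {n : ℕ | ∃ f : Fin k → Finset α,
      (∀ i, IsAntichain (· ≤ ·) (↑(f i) : Set α)) ∧
      Pairwise (Function.onFun Disjoint f) ∧
      n = (Finset.univ.biUnion f).card}.Nonempty :=
    ⟨_, fun _ => (∅ : Finset α), fun i => by simp [IsAntichain], fun i j _ => by
      simp [Function.onFun], rfl⟩
  exact Nat.sSup_mem hne (aSetBdd k)

/-- The basic counting bound for any chain family and antichain family. -/
lemma cardSumLe {l k : ℕ} (C : Fin l → Finset α) (A : Fin k → Finset α)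
    (hC : ∀ i, IsChain (· ≤ ·) (↑(C i) : Set α))
    (hCd : Pairwise (Function.onFun Disjoint C))
    (hA : ∀ j, IsAntichain (· ≤ ·) (↑(A j) : Set α))
    (hAd : Pairwise (Function.onFun Disjoint A)) :
    (Finset.univ.biUnion C).card + (Finset.univ.biUnion A).card
      ≤ Fintype.card α + k * l := by
  rw [← Finset.card_union_add_card_inter, interCardSum C A hCd hAd]
  have h1 : (Finset.univ.biUnion C ∪ Finset.univ.biUnion A).card ≤ Fintype.card α :=
    Finset.card_le_univ _
  have h2 : ∑ i, ∑ j, (C i ∩ A j).card ≤ k * l := by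
    calc ∑ i, ∑ j, (C i ∩ A j).card ≤ ∑ _i : Fin l, ∑ _j : Fin k, 1 :=
          Finset.sum_le_sum fun i _ => Finset.sum_le_sum fun j _ =>
            chainAntichainCardLe _ _ (hC i) (hA j)
      _ = k * l := by simp [mul_comm]
  omega

lemma maxSumLe (l k : ℕ) :
    cMax α l + aMax α k ≤ Fintype.card α + k * l := by
  obtain ⟨f, hf, hfd, hfc⟩ := cMax_mem (α := α) l
  obtain ⟨g, hg, hgd, hgc⟩ := aMax_mem (α := α) k
  rw [hfc, hgc]
  exact cardSumLe f g hf hfd hg hgd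

end Aux

theorem orthogonality_criterion
    (α : Type*) [PartialOrder α] [Fintype α] [DecidableEq α]
    (l k : ℕ) (C : Fin l → Finset α) (A : Fin k → Finset α)
    (hC : ∀ i, IsChain (· ≤ ·) (↑(C i) : Set α))
    (hCd : Pairwise (Function.onFun Disjoint C))
    (hA : ∀ j, IsAntichain (· ≤ ·) (↑(A j) : Set α))
    (hAd : Pairwise (Function.onFun Disjoint A)) :
    (Finset.univ.biUnion C ∪ Finset.univ.biUnion A = Finset.univ ∧
      ∀ i j, (C i ∩ A j).Nonempty) ↔
    ((Finset.univ.biUnion C).card = cMax α l ∧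
     (Finset.univ.biUnion A).card = aMax α k ∧
     cMax α l + aMax α k = Fintype.card α + k * l) := by
  have hkey : (Finset.univ.biUnion C ∪ Finset.univ.biUnion A).card
      + (Finset.univ.biUnion C ∩ Finset.univ.biUnion A).card
      = (Finset.univ.biUnion C).card + (Finset.univ.biUnion A).card :=
    Finset.card_union_add_card_inter _ _
  have hinter : (Finset.univ.biUnion C ∩ Finset.univ.biUnion A).card
      = ∑ i, ∑ j, (C i ∩ A j).card := interCardSum C A hCd hAd
  have hbound : ∀ i j, (C i ∩ A j).card ≤ 1 :=
    fun i j => chainAntichainCardLe _ _ (hC i) (hA j)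
  have hsumle : ∑ i, ∑ j, (C i ∩ A j).card ≤ k * l := by
    calc ∑ i, ∑ j, (C i ∩ A j).card ≤ ∑ _i : Fin l, ∑ _j : Fin k, 1 :=
          Finset.sum_le_sum fun i _ => Finset.sum_le_sum fun j _ => hbound i j
      _ = k * l := by simp [mul_comm]
  have hCle : (Finset.univ.biUnion C).card ≤ cMax α l := le_cMax C hC hCd
  have hAle : (Finset.univ.biUnion A).card ≤ aMax α k := le_aMax A hA hAd
  have hmax : cMax α l + aMax α k ≤ Fintype.card α + k * l := maxSumLe l k
  constructor
  · rintro ⟨hcov, hne⟩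
    have hone : ∀ i j, (C i ∩ A j).card = 1 := fun i j =>
      le_antisymm (hbound i j) (Finset.card_pos.2 (hne i j))
    have hsum : ∑ i, ∑ j, (C i ∩ A j).card = k * l := by
      simp [hone, mul_comm]
    have hucard : (Finset.univ.biUnion C ∪ Finset.univ.biUnion A).card
        = Fintype.card α := by rw [hcov, Finset.card_univ]
    refine ⟨?_, ?_, ?_⟩ <;> omega
  · rintro ⟨h1, h2, h3⟩
    have hule : (Finset.univ.biUnion C ∪ Finset.univ.biUnion A).card
        ≤ Fintype.card α := Finset.card_le_univ _
    have hsum : ∑ i, ∑ j, (C i ∩ A j).card = k * l := by omega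
    constructor
    · exact (Finset.card_eq_iff_eq_univ _).1 (by omega)
    · intro i j
      rw [← Finset.card_pos]
      by_contra hzero
      have h0 : (C i ∩ A j).card = 0 := by omega
      have hlt : ∑ p : Fin l × Fin k, (C p.1 ∩ A p.2).card
          < ∑ _p : Fin l × Fin k, 1 := by
        refine Finset.sum_lt_sum (fun p _ => hbound p.1 p.2) ⟨(i, j), Finset.mem_univ _, ?_⟩
        simp [h0]
      rw [Fintype.sum_prod_type] at hlt
      simp only [Finset.sum_const, Finset.card_univ, smul_eq_mul, mul_one,
        Fintype.card_prod, Fintype.card_fin] at hlt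
      have hmul : l * k = k * l := Nat.mul_comm l k
      omega
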